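/- With notation as in the RHD primitive-to-conservative map (ρ > 0, p > 0, ‖v‖ < 1, W = 1/√(1-‖v‖²), h = 1 + Γp/((Γ-1)ρ), D = ρW, m = ρhW²v, E = ρhW² - p), for every v* in the open unit ball, the coefficient Π₁ := (Γ/(Γ-1))·(1 - v·v*)/(1-‖v‖²) - 1 is strictly positive when Γ ∈ (1,2]. -/
import Mathlib


open scoped RealInnerProductSpace

theorem Pi1_pos {d : ℕ} (Γ : ℝ) (hΓ1 : 1 < Γ) (hΓ2 : Γ ≤ 2)
    (v vs : EuclideanSpace ℝ (Fin d)) (hv : ‖v‖ < 1) (hvs : ‖vs‖ < 1) :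
    0 < Γ / (Γ - 1) * ((1 - ⟪v, vs⟫) / (1 - ‖v‖^2)) - 1 := by
  have h1 : ⟪v, vs⟫ ≤ ‖v‖ * ‖vs‖ := real_inner_le_norm v vs
  have h2 : (0:ℝ) ≤ ‖v‖ := norm_nonneg v
  have h3 : (0:ℝ) ≤ ‖vs‖ := norm_nonneg vs
  have hden : (0:ℝ) < 1 - ‖v‖^2 := by nlinarith
  have hg : 2 ≤ Γ / (Γ - 1) := by
    rw [le_div_iff₀ (by linarith)]
    linarith
  have hnum : 1 - ‖v‖^2 < 2 * (1 - ⟪v, vs⟫) := by nlinarith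
  have : 1 < Γ / (Γ - 1) * ((1 - ⟪v, vs⟫) / (1 - ‖v‖^2)) := by
    rw [mul_div_assoc', lt_div_iff₀ hden]
    nlinarith [mul_le_mul_of_nonneg_right hg (by nlinarith : (0:ℝ) ≤ 1 - ⟪v, vs⟫)]
  linarith
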